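/- Let C and V be partial orders and (φ, ψ) a Galois connection between them (φ(c) ≤ v ⇔ c ≤ ψ(v)); set ♭ = φ∘ψ and let J be the quantization Grothendieck topology on V (a sieve on v covers iff it contains ♭(v) ⟶ v). Let g : V ⥤ C be the functor induced by ψ. Then a presheaf Q : V^op ⥤ Type is a sheaf for J if and only if there exists a presheaf P : C^op ⥤ Type such that Q is naturally isomorphic to ψ*P := g.op ⋙ P. -/

import Mathlib

open CategoryTheory

/-- The quantization Grothendieck topology on a partial order `V` induced by a
monotone idempotent deflation `♭ : V → V`: a sieve on `v` covers iff it contains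
the morphism `♭(v) ⟶ v`. -/
def quantTopology {V : Type*} [PartialOrder V] {b : V → V} (hb : Monotone b)
    (hle : ∀ v, b v ≤ v) (hidem : ∀ v, b (b v) = b v) :
    GrothendieckTopology V where
  sieves v := { S | S.arrows (homOfLE (hle v)) }
  top_mem' v := trivial
  pullback_stable' := by
    intro v v' S f hS
    exact S.downward_closed hS (homOfLE (hb (leOfHom f)))
  transitive' := by
    intro v S hS R hR
    have key : ∀ {x y : V} (_ : x = y) (hx : x ≤ v) (hy : y ≤ v),
        R.arrows (homOfLE hx) → R.arrows (homOfLE hy) := by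
      rintro x y rfl hx hy h
      exact h
    exact key (hidem v) ((hle (b v)).trans (hle v)) (hle v) (hR hS)

section AuxQuant

instance quantAux.homSubsingletonOp {V : Type*} [PartialOrder V] (a b : Vᵒᵖ) :
    Subsingleton (a ⟶ b) :=
  ⟨fun f g => congrArg Quiver.Hom.op (Subsingleton.elim f.unop g.unop)⟩

lemma quantAux.map_map {V : Type*} [PartialOrder V] (Q : Vᵒᵖ ⥤ Type _) {x y z : V}
    (f : x ⟶ y) (g : y ⟶ z) (h : x ⟶ z) (t : Q.obj (Opposite.op z)) :
    Q.map f.op (Q.map g.op t) = Q.map h.op t := by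
  rw [← FunctorToTypes.map_comp_apply, ← op_comp, Subsingleton.elim h (f ≫ g)]

lemma quantAux.map_map' {V : Type*} [PartialOrder V] (Q : Vᵒᵖ ⥤ Type _) {x y z : Vᵒᵖ}
    (f : x ⟶ y) (g : y ⟶ z) (h : x ⟶ z) (t : Q.obj x) :
    Q.map g (Q.map f t) = Q.map h t := by
  rw [← FunctorToTypes.map_comp_apply, Subsingleton.elim h (f ≫ g)]

lemma quantAux.map_id' {V : Type*} [PartialOrder V] (Q : Vᵒᵖ ⥤ Type _) {x : V}
    (f : x ⟶ x) (t : Q.obj (Opposite.op x)) : Q.map f.op t = t := by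
  rw [Subsingleton.elim f (𝟙 x), op_id, FunctorToTypes.map_id_apply]

end AuxQuant

/-- Let `(φ, ψ)` be a Galois connection between partial orders
`C` and `V`, `♭ = φ ∘ ψ`, and `J` the quantization Grothendieck topology on `V`.
A presheaf `Q : Vᵒᵖ ⥤ Type` is a sheaf for `J` if and only if there is a presheaf
`P : Cᵒᵖ ⥤ Type` with `Q` naturally isomorphic to `ψ*P = g.op ⋙ P`. -/
theorem isSheaf_iff_iso_psiStar.{w, u, u'}
    {C : Type u} {V : Type u'} [PartialOrder C] [PartialOrder V]
    {φ : C → V} {ψ : V → C} (gc : GaloisConnection φ ψ)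
    (Q : Vᵒᵖ ⥤ Type w) :
    Presieve.IsSheaf
      (quantTopology (gc.monotone_l.comp gc.monotone_u) gc.l_u_le
        (fun v => congrArg φ (gc.u_l_u_eq_u v))) Q ↔
      ∃ P : Cᵒᵖ ⥤ Type w, Nonempty (Q ≅ gc.monotone_u.functor.op ⋙ P) := by
  set J := quantTopology (gc.monotone_l.comp gc.monotone_u) gc.l_u_le
      (fun v => congrArg φ (gc.u_l_u_eq_u v)) with hJ
  constructor
  · -- sheaf → isomorphic to ψ* of some presheaf
    intro hQ
    refine ⟨gc.monotone_l.functor.op ⋙ Q, ⟨?_⟩⟩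
    have hbij : ∀ v : V, Function.Bijective
        (Q.map (homOfLE (gc.l_u_le v)).op) := by
      intro v
      set Sv : Sieve v :=
        { arrows := fun x _ => x ≤ φ (ψ v)
          downward_closed := fun hf g => (leOfHom g).trans hf } with hSv
      have hcov : Sv ∈ J v := le_refl (φ (ψ v))
      set r : φ (ψ v) ⟶ v := homOfLE (gc.l_u_le v) with hr
      constructor
      · intro t₁ t₂ h
        set x : Presieve.FamilyOfElements Q Sv.arrows := fun y f hf =>
          Q.map (homOfLE hf).op (Q.map r.op t₁) with hx
        have hcomp : x.Compatible := by
          intro Y₁ Y₂ Z g₁ g₂ f₁ f₂ h₁ h₂ _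
          rw [hx]
          rw [quantAux.map_map Q g₁ (homOfLE h₁)
                (homOfLE ((leOfHom g₁).trans h₁)),
              quantAux.map_map Q g₂ (homOfLE h₂)
                (homOfLE ((leOfHom g₁).trans h₁))]
        have ha : ∀ t', Q.map r.op t' = Q.map r.op t₁ → x.IsAmalgamation t' := by
          intro t' ht' y f hf
          show Q.map f.op t' = Q.map (homOfLE hf).op (Q.map r.op t₁)
          rw [← ht', quantAux.map_map Q (homOfLE hf) r f]
        exact (hQ Sv hcov x hcomp).unique (ha t₁ rfl) (ha t₂ h.symm)
      · intro u
        set x : Presieve.FamilyOfElements Q Sv.arrows := fun y f hf =>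
          Q.map (homOfLE hf).op u with hx
        have hcomp : x.Compatible := by
          intro Y₁ Y₂ Z g₁ g₂ f₁ f₂ h₁ h₂ _
          rw [hx]
          rw [quantAux.map_map Q g₁ (homOfLE h₁)
                (homOfLE ((leOfHom g₁).trans h₁)),
              quantAux.map_map Q g₂ (homOfLE h₂)
                (homOfLE ((leOfHom g₁).trans h₁))]
        obtain ⟨t, ht, -⟩ := hQ Sv hcov x hcomp
        refine ⟨t, ?_⟩
        rw [ht r (le_refl (φ (ψ v)))]
        exact quantAux.map_id' Q (homOfLE (le_refl (φ (ψ v)))) u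
    refine NatIso.ofComponents
      (fun X => (Equiv.ofBijective _ (hbij X.unop)).toIso) ?_
    intro X Y f
    ext t
    exact (quantAux.map_map' Q f (homOfLE (gc.l_u_le Y.unop)).op
        (homOfLE ((gc.l_u_le Y.unop).trans (leOfHom f.unop))).op t).trans
      (quantAux.map_map' Q (homOfLE (gc.l_u_le X.unop)).op
        ((gc.monotone_l.functor.map (gc.monotone_u.functor.map f.unop)).op)
        (homOfLE ((gc.l_u_le Y.unop).trans (leOfHom f.unop))).op t).symm
  · -- isomorphic to ψ*P → sheaf
    rintro ⟨P, ⟨e⟩⟩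
    have hG : Presieve.IsSheaf J (gc.monotone_u.functor.op ⋙ P) := by
      intro v S hS x hx
      set r : φ (ψ v) ⟶ v := homOfLE (gc.l_u_le v) with hr
      have hS' : S.arrows r := hS
      refine ⟨P.map (homOfLE (gc.le_u_l (ψ v))).op (x r hS'), ?_, ?_⟩
      · intro y f hf
        have hcomp : P.map (gc.monotone_u.functor.map (homOfLE (gc.l_u_le y))).op
              (x f hf) =
            P.map (gc.monotone_u.functor.map
              (homOfLE (gc.monotone_l (gc.monotone_u (leOfHom f))))).op (x r hS') :=
          hx (homOfLE (gc.l_u_le y))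
            (homOfLE (gc.monotone_l (gc.monotone_u (leOfHom f)))) hf hS'
            (Subsingleton.elim _ _)
        have h2 := congrArg (P.map (homOfLE (gc.le_u_l (ψ y))).op) hcomp
        erw [quantAux.map_map P (homOfLE (gc.le_u_l (ψ y)))
              (gc.monotone_u.functor.map (homOfLE (gc.l_u_le y))) (𝟙 (ψ y)),
            quantAux.map_id' P (𝟙 (ψ y)),
            quantAux.map_map P (homOfLE (gc.le_u_l (ψ y)))
              (gc.monotone_u.functor.map
                (homOfLE (gc.monotone_l (gc.monotone_u (leOfHom f)))))
              (homOfLE ((gc.monotone_u (leOfHom f)).trans (gc.le_u_l (ψ v))))] at h2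
        show P.map (gc.monotone_u.functor.map f).op
            (P.map (homOfLE (gc.le_u_l (ψ v))).op (x r hS')) = x f hf
        erw [quantAux.map_map P (gc.monotone_u.functor.map f)
              (homOfLE (gc.le_u_l (ψ v)))
              (homOfLE ((gc.monotone_u (leOfHom f)).trans (gc.le_u_l (ψ v))))]
        exact h2.symm
      · intro t' ht'
        have h3 : P.map (gc.monotone_u.functor.map r).op t' = x r hS' := ht' r hS'
        have h4 := congrArg (P.map (homOfLE (gc.le_u_l (ψ v))).op) h3
        erw [quantAux.map_map P (homOfLE (gc.le_u_l (ψ v)))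
              (gc.monotone_u.functor.map r) (𝟙 (ψ v)),
            quantAux.map_id' P (𝟙 (ψ v))] at h4
        exact h4
    exact Presieve.isSheaf_iso J e.symm hG
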